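/- Let M be an additive commutative group (or a module), σ : M → M an injective additive endomorphism, and I any index set. Let lim(M, σ) = {(m_k)_{k∈ℕ} : σ(m_{k+1}) = m_k} denote the inverse limit of the constant tower with transition map σ, and similarly for the direct sum ⊕_{i∈I} M with the componentwise endomorphism. Then the canonical map ⊕_{i∈I} lim(M, σ) → lim(⊕_{i∈I} M, ⊕σ) is an isomorphism of additive groups. -/

import Mathlib

/-- The inverse limit of the constant tower on `M` with transition map `σ`, as an additive
subgroup of `ℕ → M`: sequences `(m k)` with `σ (m (k+1)) = m k`. -/
def limTower {M : Type*} [AddCommGroup M] (σ : M →+ M) : AddSubgroup (ℕ → M) where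
  carrier := {x | ∀ k, σ (x (k + 1)) = x k}
  add_mem' := by
    intro a b ha hb k
    simp only [Pi.add_apply, map_add, ha k, hb k]
  zero_mem' := by
    intro k
    simp
  neg_mem' := by
    intro a ha k
    simp only [Pi.neg_apply, map_neg, ha k]

section aux

variable {M : Type*} [AddCommGroup M] (σ : M →+ M) {I : Type*}

/-- Forward map on underlying data. -/
noncomputable def fwdFun (x : I →₀ limTower σ) : ℕ → (I →₀ M) :=
  fun k => x.mapRange (fun s : limTower σ => (s : ℕ → M) k) rfl

lemma fwd_mem (x : I →₀ limTower σ) :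
    fwdFun σ x ∈ limTower (Finsupp.mapRange.addMonoidHom (ι := I) σ) := by
  intro k
  ext i
  simp only [Finsupp.mapRange.addMonoidHom_apply, Finsupp.mapRange_apply, fwdFun]
  exact (x i).2 k

lemma const_zero (hσ : Function.Injective σ)
    (y : limTower (Finsupp.mapRange.addMonoidHom (ι := I) σ)) (i : I) (k : ℕ) :
    (y : ℕ → (I →₀ M)) k i = 0 ↔ (y : ℕ → (I →₀ M)) 0 i = 0 := by
  induction k with
  | zero => rfl
  | succ n ih =>
    rw [← ih]
    have h := y.2 n
    have h' : σ ((y : ℕ → (I →₀ M)) (n + 1) i) = (y : ℕ → (I →₀ M)) n i := by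
      conv_rhs => rw [← h]
      simp [Finsupp.mapRange_apply]
    constructor
    · intro hz; rw [← h', hz, map_zero]
    · intro hz; apply hσ; rw [h', hz, map_zero]

/-- Inverse map. -/
def bwdFun (hσ : Function.Injective σ)
    (y : limTower (Finsupp.mapRange.addMonoidHom (ι := I) σ)) : I →₀ limTower σ where
  support := ((y : ℕ → (I →₀ M)) 0).support
  toFun := fun i => ⟨fun k => (y : ℕ → (I →₀ M)) k i, by
    intro k
    have h := y.2 k
    show σ ((y : ℕ → (I →₀ M)) (k + 1) i) = (y : ℕ → (I →₀ M)) k i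
    conv_rhs => rw [← h]
    simp [Finsupp.mapRange_apply]⟩
  mem_support_toFun := by
    intro i
    rw [Finsupp.mem_support_iff]
    constructor
    · intro h hne
      apply h
      have := congrArg (fun s : limTower σ => (s : ℕ → M) 0) hne
      simpa using this
    · intro h hne
      apply h
      ext k
      exact (const_zero σ hσ y i k).2 hne

end aux

/-- **Direct sums commute with inverse limits along an injective endomorphism.**
Let `M` be an additive commutative group, `σ : M →+ M` an injective additive endomorphism and
`I` any index set.  Then the canonical map
`⊕_{i ∈ I} lim(M, σ) → lim(⊕_{i ∈ I} M, ⊕σ)` is an isomorphism of additive groups. -/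
theorem stmt_10 {M : Type*} [AddCommGroup M] (σ : M →+ M)
    (hσ : Function.Injective σ) (I : Type*) :
    ∃ e : (I →₀ limTower σ) ≃+ limTower (Finsupp.mapRange.addMonoidHom (ι := I) σ),
      ∀ (x : I →₀ limTower σ) (k : ℕ) (i : I),
        ((e x : ℕ → (I →₀ M)) k) i = ((x i : ℕ → M)) k := by
  refine ⟨{ toFun := fun x => ⟨fwdFun σ x, fwd_mem σ x⟩
            invFun := bwdFun σ hσ
            left_inv := ?_
            right_inv := ?_
            map_add' := ?_ }, ?_⟩
  · intro x
    ext i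
    · rfl
  · intro y
    apply Subtype.ext
    funext k
    ext i
    simp only [fwdFun, Finsupp.mapRange_apply]
    rfl
  · intro a b
    apply Subtype.ext
    funext k
    ext i
    simp [fwdFun, Finsupp.mapRange_apply]
  · intro x k i
    simp [fwdFun, Finsupp.mapRange_apply]
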